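/- Let a < b be real numbers, let F : ℝ → ℝ be measurable, nonnegative on [a,b], and integrable on [a,b], and define the tent function h⁰(t) = (b−a)/2 − |t − (a+b)/2|. Then for every h : ℝ → ℝ that is 1-Lipschitz on [a,b] with h(a) = 0 and h(b) = 0, one has ∫_a^b F(t)·h(t) dt ≤ ∫_a^b F(t)·h⁰(t) dt; that is, h⁰ maximizes the functional h ↦ ∫_a^b F·h over this class of weight functions. -/

import Mathlib

open MeasureTheory Real Set

/-- the tent weight `h⁰ t = (b-a)/2 - |t - (a+b)/2|` maximizes
`h ↦ ∫_a^b F·h` over all 1-Lipschitz weights on `[a, b]` vanishing at both endpoints,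
for any nonnegative integrable `F` on `[a, b]`. -/
theorem stmt_10 (a b : ℝ) (hab : a < b) (F : ℝ → ℝ)
    (hFmeas : Measurable F) (hFnn : ∀ t ∈ Set.Icc a b, 0 ≤ F t)
    (hFint : MeasureTheory.IntegrableOn F (Set.Icc a b))
    (h : ℝ → ℝ) (hLip : LipschitzOnWith 1 h (Set.Icc a b))
    (hha : h a = 0) (hhb : h b = 0) :
    ∫ t in a..b, F t * h t ≤ ∫ t in a..b, F t * ((b - a) / 2 - |t - (a + b) / 2|) := by
  have hle : a ≤ b := hab.le
  -- pointwise bound h t ≤ tent t on Icc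
  have hpt : ∀ t ∈ Set.Icc a b, h t ≤ (b - a) / 2 - |t - (a + b) / 2| := by
    intro t ht
    have h1 : |h t| ≤ |t - a| := by
      have := hLip.dist_le_mul t ht a ⟨le_refl a, hle⟩
      simpa [Real.dist_eq, hha] using this
    have h2 : |h t| ≤ |t - b| := by
      have := hLip.dist_le_mul t ht b ⟨hle, le_refl b⟩
      simpa [Real.dist_eq, hhb] using this
    have ha1 : h t ≤ t - a := by
      have : |t - a| = t - a := abs_of_nonneg (by linarith [ht.1])
      linarith [le_abs_self (h t), this ▸ h1]
    have hb1 : h t ≤ b - t := by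
      have : |t - b| = b - t := by rw [abs_sub_comm]; exact abs_of_nonneg (by linarith [ht.2])
      linarith [le_abs_self (h t), this ▸ h2]
    rcases abs_cases (t - (a + b) / 2) with ⟨he, _⟩ | ⟨he, _⟩ <;> rw [he] <;> linarith
  -- bound |h t| ≤ b - a on Icc for integrability
  have hbd : ∀ᵐ t ∂(volume.restrict (Set.Icc a b)), ‖h t‖ ≤ b - a := by
    filter_upwards [ae_restrict_mem measurableSet_Icc] with t ht
    have h1 : |h t| ≤ |t - a| := by
      have := hLip.dist_le_mul t ht a ⟨le_refl a, hle⟩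
      simpa [Real.dist_eq, hha] using this
    have : |t - a| ≤ b - a := by
      rw [abs_of_nonneg (by linarith [ht.1])]; linarith [ht.2]
    simpa [Real.norm_eq_abs] using h1.trans this
  have hmeas : AEStronglyMeasurable h (volume.restrict (Set.Icc a b)) :=
    (hLip.continuousOn).aestronglyMeasurable measurableSet_Icc
  have hint1 : MeasureTheory.IntegrableOn (fun t => F t * h t) (Set.Icc a b) := by
    have := hFint.bdd_mul (c := b - a) hmeas hbd
    simpa [mul_comm, IntegrableOn] using this
  have hcont : Continuous (fun t : ℝ => (b - a) / 2 - |t - (a + b) / 2|) := by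
    continuity
  have hbd2 : ∀ᵐ t ∂(volume.restrict (Set.Icc a b)),
      ‖(b - a) / 2 - |t - (a + b) / 2|‖ ≤ b - a := by
    filter_upwards [ae_restrict_mem measurableSet_Icc] with t ht
    rw [Real.norm_eq_abs]
    rcases abs_cases (t - (a + b) / 2) with ⟨he, _⟩ | ⟨he, _⟩ <;>
      rcases abs_cases ((b - a) / 2 - |t - (a + b) / 2|) with ⟨he2, _⟩ | ⟨he2, _⟩ <;>
      rw [he2] <;> rw [he] <;> [skip; skip; skip; skip] <;> linarith [ht.1, ht.2]
  have hint2 : MeasureTheory.IntegrableOn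
      (fun t => F t * ((b - a) / 2 - |t - (a + b) / 2|)) (Set.Icc a b) := by
    have := hFint.bdd_mul (c := b - a) hcont.aestronglyMeasurable.restrict hbd2
    simpa [mul_comm, IntegrableOn] using this
  have hI1 : IntervalIntegrable (fun t => F t * h t) volume a b := by
    rw [intervalIntegrable_iff_integrableOn_Icc_of_le hle]; exact hint1
  have hI2 : IntervalIntegrable (fun t => F t * ((b - a) / 2 - |t - (a + b) / 2|)) volume a b := by
    rw [intervalIntegrable_iff_integrableOn_Icc_of_le hle]; exact hint2
  exact intervalIntegral.integral_mono_on hle hI1 hI2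
    (fun t ht => mul_le_mul_of_nonneg_left (hpt t ht) (hFnn t ht))
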